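/- Let f, g : ℂ → ℂ and let a, b : ℕ → ℂ be sequences such that for every z ∈ ℂ the series ∑_{n=0}^∞ a_n z^n converges to f(z) and ∑_{n=0}^∞ b_n z^n converges to g(z) (so f and g are entire). Fix r₀ with 0 < r₀ < 1. Then for every z ∈ ℂ the series ∑_{n=0}^∞ (∑_{k=0}^n a_k) · b_n · z^n converges, and its sum equals (1/(2πi)) ∮_{|w|=r₀} f(w)/(w(1−w)) · g(z/w) dw, where the integral is the counterclockwise circle integral over the circle of radius r₀ centered at 0. -/

import Mathlib

open scoped BigOperators

open MeasureTheory Real Complex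

lemma aux_abs_summable {a : ℕ → ℂ} {f : ℂ → ℂ}
    (hf : ∀ z : ℂ, HasSum (fun n : ℕ => a n * z ^ n) (f z)) {s : ℝ} (hs : 0 ≤ s) :
    Summable (fun n : ℕ => ‖a n‖ * s ^ n) := by
  set t : ℝ := s + 1 with ht
  have hts : s < t := by simp [ht]
  have ht0 : 0 < t := lt_of_le_of_lt hs hts
  have h0 : Filter.Tendsto (fun n : ℕ => ‖a n * (t : ℂ) ^ n‖) Filter.atTop (nhds 0) := by
    simpa using ((hf (t : ℂ)).summable.tendsto_atTop_zero).norm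
  obtain ⟨C, hC⟩ := h0.bddAbove_range
  refine Summable.of_nonneg_of_le (fun n => by positivity)
    (fun n => ?_) ((summable_geometric_of_lt_one (by positivity)
      ((div_lt_one ht0).2 hts)).mul_left C)
  have h1 : ‖a n * (t : ℂ) ^ n‖ ≤ C := hC ⟨n, rfl⟩
  have h2 : ‖a n * (t : ℂ) ^ n‖ = ‖a n‖ * t ^ n := by
    rw [norm_mul, norm_pow, Complex.norm_real, Real.norm_of_nonneg ht0.le]
  have h3 : ‖a n‖ * s ^ n = ‖a n * (t:ℂ)^n‖ * (s / t) ^ n := by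
    have : t ^ n ≠ 0 := by positivity
    rw [h2, div_pow]
    field_simp
  rw [h3]
  gcongr

lemma aux_cauchy {f : ℂ → ℂ} {a : ℕ → ℂ}
    (hf : ∀ z : ℂ, HasSum (fun n : ℕ => a n * z ^ n) (f z))
    (w : ℂ) (hw1 : ‖w‖ < 1) :
    HasSum (fun m : ℕ => (∑ k ∈ Finset.range (m + 1), a k) * w ^ m) (f w * (1 - w)⁻¹) := by
  have h1 : Summable fun n : ℕ => ‖a n * w ^ n‖ := by
    simpa [norm_mul, norm_pow] using aux_abs_summable hf (norm_nonneg w)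
  have h2 : Summable fun n : ℕ => ‖w ^ n‖ := by
    simpa [norm_pow] using summable_geometric_of_lt_one (norm_nonneg w) hw1
  have hsum := (summable_norm_sum_mul_range_of_summable_norm h1 h2).of_norm
  have ht := tsum_mul_tsum_eq_tsum_sum_range_of_summable_norm h1 h2
  rw [(hf w).tsum_eq, (hasSum_geometric_of_norm_lt_one hw1).tsum_eq] at ht
  have hh := hsum.hasSum
  rw [← ht] at hh
  have he : ∀ n : ℕ, (∑ k ∈ Finset.range (n + 1), a k * w ^ k * w ^ (n - k))
      = (∑ k ∈ Finset.range (n + 1), a k) * w ^ n := by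
    intro n
    rw [Finset.sum_mul]
    refine Finset.sum_congr rfl fun k hk => ?_
    rw [Finset.mem_range, Nat.lt_succ_iff] at hk
    rw [mul_assoc, ← pow_add, Nat.add_sub_cancel' hk]
  simpa [he] using hh

lemma aux_pointwise {f g : ℂ → ℂ} {a b : ℕ → ℂ}
    (hf : ∀ z : ℂ, HasSum (fun n : ℕ => a n * z ^ n) (f z))
    (hg : ∀ z : ℂ, HasSum (fun n : ℕ => b n * z ^ n) (g z))
    (z w : ℂ) (hw1 : ‖w‖ < 1) :
    HasSum (fun p : ℕ × ℕ =>
        ((∑ k ∈ Finset.range (p.1 + 1), a k) * w ^ p.1) * (b p.2 * (z / w) ^ p.2))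
      (f w * (1 - w)⁻¹ * g (z / w)) := by
  have hS : Summable fun k : ℕ => ‖a k‖ := by
    simpa using aux_abs_summable hf (zero_le_one)
  have hcm : ∀ m : ℕ, ‖∑ k ∈ Finset.range (m + 1), a k‖ ≤ ∑' k, ‖a k‖ := fun m =>
    (norm_sum_le _ _).trans (Summable.sum_le_tsum _ (fun _ _ => norm_nonneg _) hS)
  have h3 : Summable fun m : ℕ => ‖(∑ k ∈ Finset.range (m + 1), a k) * w ^ m‖ := by
    refine Summable.of_nonneg_of_le (fun _ => norm_nonneg _) (fun m => ?_)
      ((summable_geometric_of_lt_one (norm_nonneg w) hw1).mul_left (∑' k, ‖a k‖))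
    rw [norm_mul, norm_pow]
    exact mul_le_mul_of_nonneg_right (hcm m) (by positivity)
  have h4 : Summable fun n : ℕ => ‖b n * (z / w) ^ n‖ := by
    simpa [norm_mul, norm_pow] using aux_abs_summable hg (norm_nonneg (z / w))
  have h5 : Summable fun p : ℕ × ℕ =>
      ((∑ k ∈ Finset.range (p.1 + 1), a k) * w ^ p.1) * (b p.2 * (z / w) ^ p.2) :=
    summable_mul_of_summable_norm
      (f := fun m : ℕ => (∑ k ∈ Finset.range (m + 1), a k) * w ^ m)
      (g := fun n : ℕ => b n * (z / w) ^ n) h3 h4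
  have h6 := aux_cauchy hf w hw1
  have h7 := hg (z / w)
  have h8 := h6.mul h7 h5
  simpa using h8

lemma aux_circle {r₀ : ℝ} (hr₀ : 0 < r₀) (A : ℂ) (k : ℤ) :
    (∮ w in C(0, r₀), A * w ^ k) =
      if k = -1 then 2 * (Real.pi : ℂ) * Complex.I * A else 0 := by
  have h1 : (fun w : ℂ => A * w ^ k) = fun w : ℂ => A • (w - 0) ^ k := by
    funext w; simp [smul_eq_mul]
  rw [h1, circleIntegral.integral_smul]
  split_ifs with hk
  · subst hk
    have h2 : (fun w : ℂ => (w - 0) ^ (-1 : ℤ)) = fun w : ℂ => (w - 0)⁻¹ := by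
      funext w; simp [zpow_neg_one]
    rw [h2, circleIntegral.integral_sub_inv_of_mem_ball (by simpa using hr₀)]
    rw [smul_eq_mul]; ring
  · rw [circleIntegral.integral_sub_zpow_of_ne hk]
    simp

/-- Integral representation of the Rhaly operator on `H(ℂ)`: if
`f(z) = ∑ aₙ zⁿ` and `g(z) = ∑ bₙ zⁿ` are entire and `0 < r₀ < 1`, then for every `z ∈ ℂ`
`∑ₙ (∑_{k≤n} aₖ) bₙ zⁿ = (2πi)⁻¹ ∮_{|w|=r₀} f(w)/(w(1-w)) · g(z/w) dw`. -/
theorem rhaly_integral_representation_entire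
    (f g : ℂ → ℂ) (a b : ℕ → ℂ)
    (hf : ∀ z : ℂ, HasSum (fun n : ℕ => a n * z ^ n) (f z))
    (hg : ∀ z : ℂ, HasSum (fun n : ℕ => b n * z ^ n) (g z))
    (r₀ : ℝ) (hr₀ : 0 < r₀) (hr₁ : r₀ < 1) (z : ℂ) :
    HasSum (fun n : ℕ => (∑ k ∈ Finset.range (n + 1), a k) * b n * z ^ n)
      ((2 * (Real.pi : ℂ) * Complex.I)⁻¹ *
        ∮ w in C(0, r₀), f w / (w * (1 - w)) * g (z / w)) := by
  set c : ℕ → ℂ := fun n => ∑ k ∈ Finset.range (n + 1), a k with hcdef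
  set G : ℕ × ℕ → ℝ → ℂ := fun p θ =>
    (circleMap 0 r₀ θ * Complex.I) *
      (c p.1 * b p.2 * z ^ p.2 * (circleMap 0 r₀ θ) ^ ((p.1 : ℤ) - p.2 - 1)) with hGdef
  have hne : ∀ θ : ℝ, circleMap 0 r₀ θ ≠ 0 := fun θ => circleMap_ne_center hr₀.ne'
  have habs : ∀ θ : ℝ, ‖circleMap 0 r₀ θ‖ = r₀ := fun θ => by
    rw [norm_circleMap_zero, abs_of_pos hr₀]
  -- integrability
  have hcont : ∀ p : ℕ × ℕ, Continuous (G p) := by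
    intro p
    exact ((continuous_circleMap 0 r₀).mul continuous_const).mul
      (continuous_const.mul ((continuous_circleMap 0 r₀).zpow₀ _ fun θ => Or.inl (hne θ)))
  have hint : ∀ p : ℕ × ℕ, Integrable (G p) (volume.restrict (Set.Ioc 0 (2 * π))) :=
    fun p => (hcont p).integrableOn_Ioc
  -- value of the norm integrals
  have hnorm : ∀ p : ℕ × ℕ, (∫ θ in Set.Ioc 0 (2 * π), ‖G p θ‖) =
      (2 * π) * ((‖c p.1‖ * r₀ ^ p.1) * (‖b p.2‖ * (‖z‖ / r₀) ^ p.2)) := by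
    intro p
    have hval : ∀ θ : ℝ, ‖G p θ‖ =
        (‖c p.1‖ * r₀ ^ p.1) * (‖b p.2‖ * (‖z‖ / r₀) ^ p.2) := by
      intro θ
      have hr0' : (r₀ : ℝ) ≠ 0 := hr₀.ne'
      rw [hGdef]
      simp only [norm_mul, Complex.norm_I, norm_pow, norm_zpow, habs, mul_one]
      rw [zpow_sub₀ hr0', zpow_sub₀ hr0', zpow_one, zpow_natCast, zpow_natCast, div_pow]
      field_simp
    rw [MeasureTheory.setIntegral_congr_fun measurableSet_Ioc fun θ _ => hval θ]
    rw [MeasureTheory.setIntegral_const, Real.volume_real_Ioc_of_le Real.two_pi_pos.le, smul_eq_mul,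
      sub_zero]
  -- summability of norm integrals
  have hb_sum : Summable fun n : ℕ => ‖b n‖ * (‖z‖ / r₀) ^ n :=
    aux_abs_summable hg (by positivity)
  have hS : Summable fun k : ℕ => ‖a k‖ := by simpa using aux_abs_summable hf zero_le_one
  have hc_sum : Summable fun m : ℕ => ‖c m‖ * r₀ ^ m := by
    refine Summable.of_nonneg_of_le (fun _ => by positivity) (fun m => ?_)
      ((summable_geometric_of_lt_one hr₀.le hr₁).mul_left (∑' k, ‖a k‖))
    exact mul_le_mul_of_nonneg_right
      ((norm_sum_le _ _).trans (Summable.sum_le_tsum _ (fun _ _ => norm_nonneg _) hS)) (by positivity)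
  have hsum' : Summable fun p : ℕ × ℕ => ∫ θ in Set.Ioc 0 (2 * π), ‖G p θ‖ := by
    rw [funext hnorm]
    exact (hc_sum.mul_of_nonneg hb_sum (fun m => by positivity)
      fun n => by positivity).mul_left (2 * π)
  have H := MeasureTheory.hasSum_integral_of_summable_integral_norm hint hsum'
  -- pointwise sum of the double series
  have hpt : ∀ θ : ℝ, ∑' p : ℕ × ℕ, G p θ =
      (circleMap 0 r₀ θ * Complex.I) * (f (circleMap 0 r₀ θ) /
        (circleMap 0 r₀ θ * (1 - circleMap 0 r₀ θ)) * g (z / circleMap 0 r₀ θ)) := by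
    intro θ
    set w : ℂ := circleMap 0 r₀ θ with hw
    have hw0 : w ≠ 0 := hne θ
    have hw1 : ‖w‖ < 1 := by rw [habs]; exact hr₁
    have h1w : (1 : ℂ) - w ≠ 0 := by
      refine sub_ne_zero.2 fun h => ?_
      rw [← h] at hw1; simp at hw1
    have HP := ((aux_pointwise hf hg z w hw1).mul_left (w * Complex.I)).div_const w
    have he : ∀ p : ℕ × ℕ, G p θ =
        (w * Complex.I) * (((∑ k ∈ Finset.range (p.1 + 1), a k) * w ^ p.1) *
          (b p.2 * (z / w) ^ p.2)) / w := by
      intro p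
      rw [hGdef]
      simp only
      rw [zpow_sub₀ hw0, zpow_sub₀ hw0, zpow_one, zpow_natCast, zpow_natCast, div_pow]
      field_simp
      ring
    have HP2 : HasSum (fun p : ℕ × ℕ => G p θ)
        ((w * Complex.I) * (f w * (1 - w)⁻¹ * g (z / w)) / w) := by
      rw [funext he]; exact HP
    rw [HP2.tsum_eq]
    have hstep : f w / (w * (1 - w)) * g (z / w) = f w * (1 - w)⁻¹ * g (z / w) / w := by
      simp only [div_eq_mul_inv, mul_inv]
      ring
    rw [hstep, mul_div_assoc]
  -- identification of the integral
  have hRHS : (∫ θ in Set.Ioc 0 (2 * π), ∑' p : ℕ × ℕ, G p θ) =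
      ∮ w in C(0, r₀), f w / (w * (1 - w)) * g (z / w) := by
    rw [circleIntegral, intervalIntegral.integral_of_le Real.two_pi_pos.le]
    refine MeasureTheory.setIntegral_congr_fun measurableSet_Ioc fun θ _ => ?_
    rw [hpt θ, deriv_circleMap, smul_eq_mul]
  -- each term's integral
  have hterm : ∀ p : ℕ × ℕ, (∫ θ in Set.Ioc 0 (2 * π), G p θ) =
      if p.1 = p.2 then 2 * (Real.pi : ℂ) * Complex.I * (c p.1 * b p.2 * z ^ p.2) else 0 := by
    intro p
    have h1 : (∫ θ in Set.Ioc 0 (2 * π), G p θ) =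
        ∮ w in C(0, r₀), (c p.1 * b p.2 * z ^ p.2) * w ^ ((p.1 : ℤ) - p.2 - 1) := by
      rw [circleIntegral, intervalIntegral.integral_of_le Real.two_pi_pos.le]
      refine MeasureTheory.setIntegral_congr_fun measurableSet_Ioc fun θ _ => ?_
      rw [deriv_circleMap, smul_eq_mul, hGdef]
    rw [h1, aux_circle hr₀]
    by_cases hmn : p.1 = p.2
    · rw [if_pos (by omega), if_pos hmn]
    · rw [if_neg (by omega), if_neg hmn]
  rw [hRHS] at H
  rw [funext hterm] at H
  -- restrict to the diagonal
  have hinj : Function.Injective (fun n : ℕ => ((n, n) : ℕ × ℕ)) := fun m n h => by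
    simpa using congrArg Prod.fst h
  have hzero : ∀ p : ℕ × ℕ, p ∉ Set.range (fun n : ℕ => ((n, n) : ℕ × ℕ)) →
      (if p.1 = p.2 then 2 * (Real.pi : ℂ) * Complex.I * (c p.1 * b p.2 * z ^ p.2) else 0) = 0 := by
    intro p hp
    rw [if_neg fun h : p.1 = p.2 => hp ⟨p.1, Prod.ext_iff.mpr ⟨rfl, h⟩⟩]
  have H2 := (Function.Injective.hasSum_iff hinj hzero).2 H
  simp only [Function.comp_def, eq_self_iff_true, if_true] at H2
  have H3 := H2.mul_left (2 * (Real.pi : ℂ) * Complex.I)⁻¹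
  have hfin : ∀ n : ℕ, (2 * (Real.pi : ℂ) * Complex.I)⁻¹ *
      (2 * (Real.pi : ℂ) * Complex.I * (c n * b n * z ^ n)) = c n * b n * z ^ n := fun n =>
    inv_mul_cancel_left₀ Complex.two_pi_I_ne_zero _
  rw [funext hfin] at H3
  exact H3
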